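/- Let a ∈ C([0,1]) satisfy |λ ∫₀¹ e^{-λt} a(t) dt| = O(e^{-λ}) as λ → ∞ through the positive reals. Then a ≡ 0. -/

import Mathlib

open Real Set intervalIntegral MeasureTheory


lemma aux_diff (g : ℝ → ℝ) (hg : Continuous g) (M : ℝ) (hM : ∀ u, |g u| ≤ M) :
    Differentiable ℂ (fun z => ∫ u in (0:ℝ)..1, Complex.exp (z * u) * (g u : ℂ)) := by
  intro z₀
  have hcont : ∀ z : ℂ, Continuous fun u : ℝ => Complex.exp (z * u) * (g u : ℂ) := by
    intro z
    exact (Complex.continuous_exp.comp (continuous_const.mul Complex.continuous_ofReal)).mul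
      (Complex.continuous_ofReal.comp hg)
  have hcont' : ∀ z : ℂ, Continuous fun u : ℝ => Complex.exp (z * u) * (u : ℂ) * (g u : ℂ) := by
    intro z
    exact ((Complex.continuous_exp.comp (continuous_const.mul Complex.continuous_ofReal)).mul
      Complex.continuous_ofReal).mul (Complex.continuous_ofReal.comp hg)
  have key := intervalIntegral.hasDerivAt_integral_of_dominated_loc_of_deriv_le
    (𝕜 := ℂ) (μ := volume) (a := 0) (b := 1)
    (F := fun z u => Complex.exp (z * u) * (g u : ℂ))
    (F' := fun z u => Complex.exp (z * u) * (u : ℂ) * (g u : ℂ))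
    (x₀ := z₀) (bound := fun _ => Real.exp (‖z₀‖ + 1) * M) (Metric.ball_mem_nhds z₀ one_pos)
    (Filter.Eventually.of_forall fun z => (hcont z).aestronglyMeasurable)
    ((hcont z₀).intervalIntegrable 0 1)
    ((hcont' z₀).aestronglyMeasurable)
    ?_ (intervalIntegrable_const) ?_
  · exact key.2.differentiableAt
  · refine Filter.Eventually.of_forall fun u hu z hz => ?_
    rw [Set.uIoc_of_le (by norm_num : (0:ℝ) ≤ 1)] at hu
    have hz' : ‖z‖ ≤ ‖z₀‖ + 1 := by
      have := mem_ball_iff_norm.mp hz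
      have h2 := norm_sub_norm_le z z₀
      linarith
    have h1 : ‖Complex.exp (z * u) * (u : ℂ) * (g u : ℂ)‖
        = Real.exp ((z * u).re) * |u| * |g u| := by
      simp [Complex.norm_exp, abs_mul]
    rw [h1]
    have h2 : (z * (u : ℂ)).re = z.re * u := by
      simp [Complex.mul_re]
    have h3 : Real.exp ((z * u).re) ≤ Real.exp (‖z₀‖ + 1) := by
      rw [h2]
      apply Real.exp_le_exp.mpr
      have hre : |z.re| ≤ ‖z‖ := Complex.abs_re_le_norm z
      nlinarith [hu.1.le, hu.2, abs_nonneg z.re, le_abs_self z.re, norm_nonneg z]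
    have h4 : |u| ≤ 1 := by rw [abs_of_nonneg hu.1.le]; exact hu.2
    have h5 : 0 ≤ M := le_trans (abs_nonneg _) (hM 0)
    calc Real.exp ((z * u).re) * |u| * |g u|
        ≤ Real.exp (‖z₀‖ + 1) * 1 * M := by
          apply mul_le_mul (mul_le_mul h3 h4 (abs_nonneg _) (Real.exp_pos _).le) (hM u)
            (abs_nonneg _)
          positivity
      _ = Real.exp (‖z₀‖ + 1) * M := by ring
  · refine Filter.Eventually.of_forall fun u hu z hz => ?_
    have : HasDerivAt (fun z : ℂ => z * (u : ℂ)) (u : ℂ) z := hasDerivAt_mul_const _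
    exact ((this.cexp).mul_const ((g u : ℂ)))


lemma aux_sw (g : ℝ → ℝ) (hg : Continuous g)
    (hmom : ∀ n : ℕ, ∫ u in (0:ℝ)..1, Real.exp u ^ n * g u = 0) :
    ∀ u ∈ Icc (0:ℝ) 1, g u = 0 := by
  obtain ⟨M, hM⟩ := (isCompact_Icc (a := (0:ℝ)) (b := 1)).exists_bound_of_continuousOn
    hg.continuousOn
  have hM0 : 0 ≤ M := le_trans (norm_nonneg (g 0)) (hM 0 (by norm_num))
  have key : ∀ p : Polynomial ℝ, ∫ u in (0:ℝ)..1, Polynomial.eval (Real.exp u) p * g u = 0 := by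
    intro p
    have heq : ∀ u : ℝ, Polynomial.eval (Real.exp u) p * g u
        = ∑ i ∈ Finset.range (p.natDegree + 1), p.coeff i * (Real.exp u ^ i * g u) := by
      intro u
      rw [Polynomial.eval_eq_sum_range, Finset.sum_mul]
      simp [mul_assoc]
    simp_rw [heq]
    rw [intervalIntegral.integral_finset_sum]
    · refine Finset.sum_eq_zero fun i _ => ?_
      rw [intervalIntegral.integral_const_mul, hmom i, mul_zero]
    · intro i _
      exact Continuous.intervalIntegrable (by fun_prop) 0 1
  set E : C(Icc (0:ℝ) 1, ℝ) :=
    ⟨fun x => Real.exp x, Real.continuous_exp.comp continuous_subtype_val⟩ with hE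
  set A : Subalgebra ℝ C(Icc (0:ℝ) 1, ℝ) := (Polynomial.aeval E).range with hA
  have hEA : E ∈ A := ⟨Polynomial.X, by simp⟩
  have hsep : A.SeparatesPoints := by
    intro x y hxy
    refine ⟨E, ⟨E, hEA, rfl⟩, ?_⟩
    exact fun h => hxy (Subtype.ext (Real.exp_injective h))
  have hL2 : ∫ u in (0:ℝ)..1, g u * g u = 0 := by
    have habs : ∀ ε : ℝ, 0 < ε → |∫ u in (0:ℝ)..1, g u * g u| ≤ ε * (M + 1) := by
      intro ε hε
      obtain ⟨q, hq⟩ := ContinuousMap.exists_mem_subalgebra_near_continuous_of_separatesPoints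
        A hsep (fun x : Icc (0:ℝ) 1 => g x) (hg.comp continuous_subtype_val) ε hε
      obtain ⟨p, hp0⟩ := q.2
      have hp : (Polynomial.aeval E) p = (q : C(Icc (0:ℝ) 1, ℝ)) := hp0
      have hqx : ∀ x : Icc (0:ℝ) 1, (q : C(Icc (0:ℝ) 1, ℝ)) x = Polynomial.eval (Real.exp x) p := by
        intro x
        rw [← hp, Polynomial.aeval_continuousMap_apply]
        rfl
      have h1 : (∫ u in (0:ℝ)..1, g u * g u)
          = ∫ u in (0:ℝ)..1, (g u - Polynomial.eval (Real.exp u) p) * g u := by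
        have hi1 : IntervalIntegrable (fun u => g u * g u) volume 0 1 :=
          Continuous.intervalIntegrable (by fun_prop) 0 1
        have hi2 : IntervalIntegrable (fun u => Polynomial.eval (Real.exp u) p * g u) volume 0 1 :=
          Continuous.intervalIntegrable (by fun_prop) 0 1
        rw [show (fun u => (g u - Polynomial.eval (Real.exp u) p) * g u)
            = fun u => g u * g u - Polynomial.eval (Real.exp u) p * g u by ext u; ring,
          intervalIntegral.integral_sub hi1 hi2, key p, sub_zero]
      rw [h1]
      have hb : ∀ u ∈ Set.uIoc (0:ℝ) 1,
          ‖(g u - Polynomial.eval (Real.exp u) p) * g u‖ ≤ ε * (M + 1) := by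
        intro u hu
        have hu' : u ∈ Icc (0:ℝ) 1 := by
          rw [Set.uIoc_of_le (by norm_num : (0:ℝ) ≤ 1)] at hu
          exact ⟨hu.1.le, hu.2⟩
        have h2 := hq ⟨u, hu'⟩
        rw [hqx ⟨u, hu'⟩] at h2
        have h3 : |g u - Polynomial.eval (Real.exp u) p| ≤ ε := by
          rw [← abs_sub_comm]
          exact le_of_lt h2
        have h4 : |g u| ≤ M + 1 := le_trans (hM u hu') (by linarith)
        calc ‖(g u - Polynomial.eval (Real.exp u) p) * g u‖
            = |g u - Polynomial.eval (Real.exp u) p| * |g u| := abs_mul _ _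
          _ ≤ ε * (M + 1) := mul_le_mul h3 h4 (abs_nonneg _) hε.le
      have := intervalIntegral.norm_integral_le_of_norm_le_const hb
      simpa using this
    by_contra hne
    have hpos : 0 < |∫ u in (0:ℝ)..1, g u * g u| := abs_pos.mpr hne
    have := habs (|∫ u in (0:ℝ)..1, g u * g u| / (2 * (M + 1))) (by positivity)
    have h5 : |∫ u in (0:ℝ)..1, g u * g u| / (2 * (M + 1)) * (M + 1)
        = |∫ u in (0:ℝ)..1, g u * g u| / 2 := by
      field_simp
    rw [h5] at this
    linarith
  have hnn : 0 ≤ᵐ[volume.restrict (Ioc (0:ℝ) 1 ∪ Ioc 1 0)] fun u => g u * g u :=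
    Filter.Eventually.of_forall fun u => mul_self_nonneg _
  have hint : IntervalIntegrable (fun u => g u * g u) volume 0 1 :=
    Continuous.intervalIntegrable (by fun_prop) 0 1
  have hae := (intervalIntegral.integral_eq_zero_iff_of_nonneg_ae hnn hint).mp hL2
  rw [Set.Ioc_eq_empty (by norm_num : ¬ (1:ℝ) < 0), Set.union_empty,
    Measure.restrict_congr_set Ioc_ae_eq_Icc] at hae
  have heqon := Measure.eqOn_Icc_of_ae_eq volume (zero_ne_one : (0:ℝ) ≠ 1) hae
    ((hg.mul hg).continuousOn) continuousOn_const
  intro u hu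
  have := heqon hu
  simp only [Pi.zero_apply] at this
  exact mul_self_eq_zero.mp this


open Real Set intervalIntegral

/-- If a ∈ C([0,1]) and |λ ∫₀¹ e^{-λt} a(t) dt| ≤ C e^{-λ} for all real λ ≥ 1,
then a ≡ 0 on [0,1]. -/
theorem stmt_10 (a : ℝ → ℝ) (ha : ContinuousOn a (Icc 0 1))
    (C : ℝ)
    (hbound : ∀ l : ℝ, 1 ≤ l → |l * ∫ t in (0:ℝ)..1, Real.exp (-l * t) * a t|
      ≤ C * Real.exp (-l)) :
    ∀ t ∈ Icc (0:ℝ) 1, a t = 0 := by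
  -- continuous extension of `a` to all of `ℝ`
  set h : ℝ → ℝ := Set.IccExtend zero_le_one ((Icc (0:ℝ) 1).restrict a) with hhdef
  have hh : Continuous h := (continuousOn_iff_continuous_restrict.mp ha).Icc_extend'
  have hha : ∀ t ∈ Icc (0:ℝ) 1, h t = a t := by
    intro t ht
    rw [hhdef, Set.IccExtend_of_mem _ _ ht]
    rfl
  obtain ⟨M, hM'⟩ := (isCompact_Icc (a := (0:ℝ)) (b := 1)).exists_bound_of_continuousOn
    hh.continuousOn
  have hM : ∀ t : ℝ, |h t| ≤ M := by
    intro t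
    have h1 : h t = h (Set.projIcc 0 1 zero_le_one t) := by
      rw [hhdef]
      unfold Set.IccExtend
      rw [Function.comp_apply, Function.comp_apply, Set.projIcc_val]
    rw [h1]
    exact hM' _ (Set.projIcc 0 1 zero_le_one t).2
  have hM0 : 0 ≤ M := le_trans (abs_nonneg _) (hM 0)
  set g : ℝ → ℝ := fun u => h (1 - u) with hgdef
  have hg : Continuous g := hh.comp (continuous_const.sub continuous_id)
  have hgM : ∀ u, |g u| ≤ M := fun u => hM _
  set G : ℂ → ℂ := fun z => ∫ u in (0:ℝ)..1, Complex.exp (z * u) * (g u : ℂ) with hGdef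
  have hGdiff : Differentiable ℂ G := aux_diff g hg M hgM
  -- real form of G
  have hGr : ∀ x : ℝ, G x = ((∫ u in (0:ℝ)..1, Real.exp (x*u) * g u : ℝ) : ℂ) := by
    intro x
    rw [hGdef, ← intervalIntegral.integral_ofReal]
    apply intervalIntegral.integral_congr
    intro u hu
    push_cast [Complex.ofReal_exp]
    ring
  -- relation with the integral of `a`
  have hrel : ∀ x : ℝ, (∫ u in (0:ℝ)..1, Real.exp (x*u) * g u)
      = Real.exp x * ∫ t in (0:ℝ)..1, Real.exp (-x*t) * a t := by
    intro x
    have h1 : (∫ u in (0:ℝ)..1, Real.exp (x*u) * g u)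
        = ∫ u in (0:ℝ)..1, (fun t => Real.exp (x*(1-t)) * h t) (1 - u) := by
      apply intervalIntegral.integral_congr
      intro u _
      simp only [hgdef]
      norm_num
    rw [h1, intervalIntegral.integral_comp_sub_left (fun t => Real.exp (x*(1-t)) * h t) 1]
    norm_num
    rw [← intervalIntegral.integral_const_mul]
    apply intervalIntegral.integral_congr
    intro t ht
    rw [Set.uIcc_of_le (by norm_num : (0:ℝ) ≤ 1)] at ht
    beta_reduce
    rw [hha t ht, show x * (1-t) = x + -(x*t) by ring, Real.exp_add]
    ring
  -- global bound for G
  have hGb : ∀ z : ℂ, ‖G z‖ ≤ M * Real.exp (max z.re 0) := by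
    intro z
    have hb : ∀ u ∈ Set.uIoc (0:ℝ) 1,
        ‖Complex.exp (z * u) * (g u : ℂ)‖ ≤ M * Real.exp (max z.re 0) := by
      intro u hu
      rw [Set.uIoc_of_le (by norm_num : (0:ℝ) ≤ 1)] at hu
      have h1 : ‖Complex.exp (z * u) * (g u : ℂ)‖ = Real.exp ((z * u).re) * |g u| := by
        simp [Complex.norm_exp]
      rw [h1]
      have h2 : (z * (u : ℂ)).re = z.re * u := by simp [Complex.mul_re]
      have h3 : Real.exp ((z * u).re) ≤ Real.exp (max z.re 0) := by
        rw [h2]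
        apply Real.exp_le_exp.mpr
        rcases le_or_gt z.re 0 with hc | hc
        · exact le_trans (mul_nonpos_of_nonpos_of_nonneg hc hu.1.le) (le_max_right _ _)
        · exact le_trans (by nlinarith [hu.2, hu.1.le] : z.re * u ≤ z.re) (le_max_left _ _)
      calc Real.exp ((z * u).re) * |g u| ≤ Real.exp (max z.re 0) * M :=
            mul_le_mul h3 (hgM u) (abs_nonneg _) (Real.exp_pos _).le
        _ = M * Real.exp (max z.re 0) := by ring
    have := intervalIntegral.norm_integral_le_of_norm_le_const hb
    simpa using this
  have hC0 : 0 ≤ C := by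
    have h1 := hbound 1 le_rfl
    nlinarith [abs_nonneg (1 * ∫ t in (0:ℝ)..1, Real.exp (-1 * t) * a t), Real.exp_pos (-1:ℝ)]
  -- bound on the positive real axis
  have hGx : ∀ x : ℝ, 1 ≤ x → ‖G x‖ ≤ C := by
    intro x hx
    rw [hGr x, Complex.norm_real, Real.norm_eq_abs, hrel x, abs_mul,
      abs_of_pos (Real.exp_pos x)]
    set I : ℝ := ∫ t in (0:ℝ)..1, Real.exp (-x*t) * a t with hI
    have hb := hbound x hx
    rw [abs_mul, abs_of_pos (by linarith : (0:ℝ) < x)] at hb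
    have hexp : Real.exp (-x) * Real.exp x = 1 := by
      rw [← Real.exp_add]; simp
    have f1 : x * |I| * Real.exp x ≤ C := by
      have := mul_le_mul_of_nonneg_right hb (Real.exp_pos x).le
      calc x * |I| * Real.exp x ≤ C * Real.exp (-x) * Real.exp x := this
        _ = C * (Real.exp (-x) * Real.exp x) := by ring
        _ = C := by rw [hexp, mul_one]
    nlinarith [abs_nonneg I, (Real.exp_pos x).le, hx, f1]
  -- Phragmen-Lindelof
  have hd : DiffContOnCl ℂ G {z : ℂ | 0 < z.re} := hGdiff.diffContOnCl
  have hexpG : ∃ c < (2:ℝ), ∃ B, G =O[Bornology.cobounded ℂ ⊓ Filter.principal {z : ℂ | 0 < z.re}]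
      fun z => Real.exp (B * ‖z‖ ^ c) := by
    refine ⟨1, by norm_num, 1, Asymptotics.IsBigO.of_bound M ?_⟩
    filter_upwards with z
    have h1 : ‖G z‖ ≤ M * Real.exp (max z.re 0) := hGb z
    have h2 : max z.re 0 ≤ ‖z‖ := by
      apply max_le _ (norm_nonneg z)
      exact le_trans (le_abs_self _) (Complex.abs_re_le_norm z)
    have h3 : Real.exp (max z.re 0) ≤ Real.exp ((1:ℝ) * ‖z‖ ^ (1:ℝ)) := by
      apply Real.exp_le_exp.mpr
      rw [Real.rpow_one, one_mul]
      exact h2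
    have h4 : ‖Real.exp ((1:ℝ) * ‖z‖ ^ (1:ℝ))‖
        = Real.exp ((1:ℝ) * ‖z‖ ^ (1:ℝ)) := by
      rw [Real.norm_eq_abs, abs_of_pos (Real.exp_pos _)]
    show ‖G z‖ ≤ M * ‖Real.exp ((1:ℝ) * ‖z‖ ^ (1:ℝ))‖
    rw [h4]
    exact le_trans h1 (mul_le_mul_of_nonneg_left h3 hM0)
  have hre : Filter.IsBoundedUnder (· ≤ ·) Filter.atTop fun x : ℝ => ‖G x‖ := by
    refine ⟨C, ?_⟩
    rw [Filter.eventually_map]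
    filter_upwards [Filter.eventually_ge_atTop (1:ℝ)] with x hx
    exact hGx x hx
  have him : ∀ x : ℝ, ‖G (x * Complex.I)‖ ≤ M := by
    intro x
    have := hGb (x * Complex.I)
    simpa using this
  have hPL : ∀ z : ℂ, 0 ≤ z.re → ‖G z‖ ≤ M := fun z hz =>
    PhragmenLindelof.right_half_plane_of_bounded_on_real hd hexpG hre him hz
  have hGbdd : ∀ z : ℂ, ‖G z‖ ≤ M := by
    intro z
    rcases le_or_gt 0 z.re with hz | hz
    · exact hPL z hz
    · have := hGb z
      rwa [max_eq_right hz.le, Real.exp_zero, mul_one] at this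
  have hrange : Bornology.IsBounded (Set.range G) := by
    apply (Metric.isBounded_closedBall (x := (0:ℂ)) (r := M)).subset
    rintro y ⟨z, rfl⟩
    simpa [Metric.mem_closedBall, dist_eq_norm] using hGbdd z
  -- decay at -∞ on the real axis
  have hGneg : ∀ y : ℝ, 1 ≤ y → ‖G (-y : ℝ)‖ ≤ M / y := by
    intro y hy
    have hy0 : (0:ℝ) < y := by linarith
    rw [hGr (-y), Complex.norm_real, Real.norm_eq_abs]
    have s1 : |∫ u in (0:ℝ)..1, Real.exp (-y*u) * g u|
        ≤ ∫ u in (0:ℝ)..1, Real.exp (-y*u) * M := by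
      refine le_trans (intervalIntegral.abs_integral_le_integral_abs zero_le_one) ?_
      apply intervalIntegral.integral_mono_on zero_le_one
      · exact Continuous.intervalIntegrable (by fun_prop) 0 1
      · exact Continuous.intervalIntegrable (by fun_prop) 0 1
      · intro u _
        rw [abs_mul, abs_of_pos (Real.exp_pos _)]
        exact mul_le_mul_of_nonneg_left (hgM u) (Real.exp_pos _).le
    have s2 : (∫ u in (0:ℝ)..1, Real.exp (-y*u) * M) = (1 - Real.exp (-y))/y * M := by
      rw [intervalIntegral.integral_mul_const]
      congr 1
      have hderiv : ∀ u ∈ Set.uIcc (0:ℝ) 1,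
          HasDerivAt (fun v => -(1/y) * Real.exp (-y*v)) (Real.exp (-y*u)) u := by
        intro u _
        have d1 : HasDerivAt (fun v : ℝ => -y * v) (-y) u := by
          simpa using (hasDerivAt_id u).const_mul (-y)
        have d2 := (d1.exp).const_mul (-(1/y))
        refine d2.congr_deriv ?_
        have hy' : y ≠ 0 := hy0.ne'
        rw [show -(1 / y) * (Real.exp (-y * u) * -y) = Real.exp (-y * u) * (y / y) by ring,
          div_self hy', mul_one]
      rw [intervalIntegral.integral_eq_sub_of_hasDerivAt hderiv
        (Continuous.intervalIntegrable (by fun_prop) 0 1)]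
      field_simp
      rw [mul_zero, neg_zero, Real.exp_zero]
      ring
    rw [s2] at s1
    refine le_trans s1 ?_
    rw [div_mul_eq_mul_div, div_le_div_iff₀ hy0 hy0]
    nlinarith [mul_nonneg (mul_nonneg (Real.exp_pos (-y)).le hM0) hy0.le]
  -- G is identically zero
  have hG0 : ∀ z : ℂ, G z = 0 := by
    intro z
    have hz : ∀ n : ℕ, 1 ≤ n → ‖G z‖ ≤ M / n := by
      intro n hn
      have hcon := hGdiff.apply_eq_apply_of_bounded hrange z ((-(n:ℝ) : ℝ) : ℂ)
      rw [hcon]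
      exact hGneg n (by exact_mod_cast hn)
    have htend : Filter.Tendsto (fun n : ℕ => M / n) Filter.atTop (nhds 0) :=
      tendsto_const_div_atTop_nhds_zero_nat M
    have h0 : ‖G z‖ ≤ 0 :=
      ge_of_tendsto htend (Filter.eventually_atTop.mpr ⟨1, fun n hn => hz n hn⟩)
    simpa using norm_le_zero_iff.mp h0
  -- moments vanish
  have hmom : ∀ n : ℕ, ∫ u in (0:ℝ)..1, Real.exp u ^ n * g u = 0 := by
    intro n
    have h1 := hG0 ((n:ℝ) : ℂ)
    rw [hGr (n:ℝ)] at h1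
    have h2 : (∫ u in (0:ℝ)..1, Real.exp ((n:ℝ)*u) * g u) = 0 := by exact_mod_cast h1
    have h3 : (∫ u in (0:ℝ)..1, Real.exp u ^ n * g u)
        = ∫ u in (0:ℝ)..1, Real.exp ((n:ℝ)*u) * g u := by
      apply intervalIntegral.integral_congr
      intro u _
      simp [Real.exp_nat_mul]
    rw [h3]
    exact h2
  have final := aux_sw g hg hmom
  intro t ht
  have h1t : 1 - t ∈ Icc (0:ℝ) 1 := ⟨by linarith [ht.2], by linarith [ht.1]⟩
  have h2 := final (1-t) h1t
  rw [← hha t ht]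
  have h3 : g (1-t) = h t := by rw [hgdef]; norm_num
  rw [← h3]
  exact h2
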